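/- Let V ⊂ ℝ^d be closed and bounded, p ∈ ℝ^d, and B any origin-centered ellipsoid containing V. Suppose there exists v ∈ V with pᵀv ≥ κ > 0, and let B₊ be the minimum-volume origin-centered enclosing ellipsoid of {v ∈ B : |pᵀv| ≤ κ/(3√d)}. Then vol(B₊)/vol(B) ≤ 3/5. -/

import Mathlib

open Matrix MeasureTheory

/-- The origin-centered ellipsoid determined by a positive definite matrix. -/
def ellipsoid {d : ℕ} (A : Matrix (Fin d) (Fin d) ℝ) : Set (Fin d → ℝ) :=
  {x | x ⬝ᵥ A *ᵥ x ≤ 1}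

namespace Stmt14Aux
variable {d : ℕ}

lemma quad_conj (M T : Matrix (Fin d) (Fin d) ℝ) (y : Fin d → ℝ) :
    (T *ᵥ y) ⬝ᵥ M *ᵥ (T *ᵥ y) = y ⬝ᵥ (Tᵀ * M * T) *ᵥ y := by
  rw [mulVec_mulVec, dotProduct_mulVec, ← vecMul_transpose, vecMul_vecMul,
    ← dotProduct_mulVec, Matrix.mul_assoc]

lemma transpose_eq {M : Matrix (Fin d) (Fin d) ℝ} (hM : M.IsHermitian) : Mᵀ = M := by
  rw [← Matrix.conjTranspose_eq_transpose_of_trivial]; exact hM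

lemma det_sqrt_nonneg {A : Matrix (Fin d) (Fin d) ℝ} (hA : A.PosSemidef) :
    0 ≤ A.det := by
  rw [hA.isHermitian.det_eq_prod_eigenvalues]
  exact Finset.prod_nonneg fun i _ => hA.eigenvalues_nonneg i

open scoped MatrixOrder in
/-- volume comparison of two ellipsoids -/
lemma vol_le {A B : Matrix (Fin d) (Fin d) ℝ} (hA : A.PosDef) (hB : B.PosDef)
    (hdet : 25 / 9 * A.det ≤ B.det) :
    volume (ellipsoid B) ≤ (3 / 5 : ENNReal) * volume (ellipsoid A) := by
  set SA := CFC.sqrt A with hSA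
  set SB := CFC.sqrt B with hSB
  have hSAps : SA.PosSemidef := (CFC.sqrt_nonneg A).posSemidef
  have hSBps : SB.PosSemidef := (CFC.sqrt_nonneg B).posSemidef
  have hSAt : SAᵀ = SA := transpose_eq hSAps.isHermitian
  have hSBt : SBᵀ = SB := transpose_eq hSBps.isHermitian
  have hSAA : SA * SA = A := CFC.sqrt_mul_sqrt_self A hA.posSemidef.nonneg
  have hSBB : SB * SB = B := CFC.sqrt_mul_sqrt_self B hB.posSemidef.nonneg
  have hdA : 0 < A.det := hA.det_pos
  have hdB : 0 < B.det := hB.det_pos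
  have hdSA : 0 < SA.det := by
    rcases (det_sqrt_nonneg hSAps).lt_or_eq with h | h
    · exact h
    · exfalso; have : A.det = 0 := by rw [← hSAA, det_mul, ← h]; ring
      exact hdA.ne' this
  have hdSB : 0 < SB.det := by
    rcases (det_sqrt_nonneg hSBps).lt_or_eq with h | h
    · exact h
    · exfalso; have : B.det = 0 := by rw [← hSBB, det_mul, ← h]; ring
      exact hdB.ne' this
  have hdetA : SA.det ^ 2 = A.det := by rw [← hSAA, det_mul]; ring
  have hdetB : SB.det ^ 2 = B.det := by rw [← hSBB, det_mul]; ring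
  have hUA : IsUnit SA.det := isUnit_iff_ne_zero.2 hdSA.ne'
  have hUB : IsUnit SB.det := isUnit_iff_ne_zero.2 hdSB.ne'
  haveI : Invertible SA := SA.invertibleOfIsUnitDet hUA
  haveI : Invertible SB := SB.invertibleOfIsUnitDet hUB
  set T : Matrix (Fin d) (Fin d) ℝ := SB⁻¹ * SA with hT
  set T' : Matrix (Fin d) (Fin d) ℝ := SA⁻¹ * SB with hT'
  have hTT' : T * T' = 1 := by
    rw [hT, hT']
    simp [Matrix.mul_assoc, Matrix.mul_inv_cancel_left_of_invertible,
      Matrix.inv_mul_cancel_left_of_invertible, Matrix.mul_inv_of_invertible,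
      Matrix.inv_mul_of_invertible]
  have hTconj : Tᵀ * B * T = A := by
    rw [hT, transpose_mul, hSAt, transpose_nonsing_inv, hSBt, ← hSBB, ← hSAA]
    simp [Matrix.mul_assoc, Matrix.mul_inv_cancel_left_of_invertible,
      Matrix.inv_mul_cancel_left_of_invertible, Matrix.mul_inv_of_invertible,
      Matrix.inv_mul_of_invertible]
  have hT'conj : T'ᵀ * A * T' = B := by
    rw [hT', transpose_mul, hSBt, transpose_nonsing_inv, hSAt, ← hSAA, ← hSBB]
    simp [Matrix.mul_assoc, Matrix.mul_inv_cancel_left_of_invertible,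
      Matrix.inv_mul_cancel_left_of_invertible, Matrix.mul_inv_of_invertible,
      Matrix.inv_mul_of_invertible]
  have himg : ellipsoid B = Matrix.toLin' T '' ellipsoid A := by
    ext x
    constructor
    · intro hx
      refine ⟨T' *ᵥ x, ?_, ?_⟩
      · show (T' *ᵥ x) ⬝ᵥ A *ᵥ (T' *ᵥ x) ≤ 1
        rw [quad_conj, hT'conj]; exact hx
      · rw [Matrix.toLin'_apply, mulVec_mulVec, hTT', one_mulVec]
    · rintro ⟨y, hy, rfl⟩
      show (Matrix.toLin' T y) ⬝ᵥ B *ᵥ (Matrix.toLin' T y) ≤ 1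
      rw [Matrix.toLin'_apply, quad_conj, hTconj]; exact hy
  have hratio : |T.det| ≤ 3 / 5 := by
    have hTdet : T.det = SA.det / SB.det := by
      rw [hT, det_mul, det_nonsing_inv, Ring.inverse_eq_inv']
      field_simp
    have h53 : 5 / 3 * SA.det ≤ SB.det := by
      nlinarith [hdetA, hdetB, hdSA, hdSB, hdet]
    rw [hTdet, abs_of_nonneg (by positivity)]
    rw [div_le_iff₀ hdSB]
    nlinarith
  rw [himg, Measure.addHaar_image_linearMap, LinearMap.det_toLin']
  have h35 : (3 / 5 : ENNReal) = ENNReal.ofReal (3 / 5) := by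
    rw [ENNReal.ofReal_div_of_pos (by norm_num)]
    norm_num
  rw [h35]
  exact mul_le_mul_left (ENNReal.ofReal_le_ofReal hratio) _



lemma vecMulVec_transpose (p : Fin d → ℝ) : (vecMulVec p p)ᵀ = vecMulVec p p := by
  ext i j; simp [vecMulVec_apply, mul_comm]

lemma quad_vecMulVec (p x : Fin d → ℝ) :
    x ⬝ᵥ (vecMulVec p p) *ᵥ x = (p ⬝ᵥ x) ^ 2 := by
  have h : (vecMulVec p p) *ᵥ x = (p ⬝ᵥ x) • p := by
    ext i
    simp [vecMulVec_apply, mulVec, dotProduct, Finset.mul_sum, mul_comm, mul_left_comm]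
  rw [h, dotProduct_smul, dotProduct_comm, smul_eq_mul, sq]

lemma mul_vecMulVec (A : Matrix (Fin d) (Fin d) ℝ) (u w : Fin d → ℝ) :
    A * vecMulVec u w = vecMulVec (A *ᵥ u) w := by
  ext i j
  simp [Matrix.mul_apply, vecMulVec_apply, mulVec, dotProduct, Finset.sum_mul, mul_assoc]

lemma smul_vecMulVec (c : ℝ) (u w : Fin d → ℝ) :
    c • vecMulVec u w = vecMulVec (c • u) w := by
  ext i j; simp [vecMulVec_apply, mul_assoc]

end Stmt14Aux

set_option maxHeartbeats 1000000 in
open Stmt14Aux in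
/-- Ellipsoid volume-shrinkage lemma. -/
theorem stmt_14 {d : ℕ} (hd : 1 ≤ d) (V : Set (Fin d → ℝ))
    (hVclosed : IsClosed V) (hVbdd : Bornology.IsBounded V)
    (p : Fin d → ℝ) (κ : ℝ) (hκ : 0 < κ)
    (A : Matrix (Fin d) (Fin d) ℝ) (hA : A.PosDef) (hVA : V ⊆ ellipsoid A)
    (v : Fin d → ℝ) (hv : v ∈ V) (hpv : κ ≤ p ⬝ᵥ v)
    (Aplus : Matrix (Fin d) (Fin d) ℝ) (hAplus : Aplus.PosDef)
    (hcover : {w ∈ ellipsoid A | |p ⬝ᵥ w| ≤ κ / (3 * Real.sqrt d)} ⊆ ellipsoid Aplus)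
    (hmin : ∀ A' : Matrix (Fin d) (Fin d) ℝ, A'.PosDef →
      {w ∈ ellipsoid A | |p ⬝ᵥ w| ≤ κ / (3 * Real.sqrt d)} ⊆ ellipsoid A' →
      volume (ellipsoid Aplus) ≤ volume (ellipsoid A')) :
    volume (ellipsoid Aplus) ≤ (3 / 5 : ENNReal) * volume (ellipsoid A) := by
  classical
  have hD1 : (1 : ℝ) ≤ (d : ℝ) := by exact_mod_cast hd
  have hD0 : (0 : ℝ) < (d : ℝ) := by linarith
  set D : ℝ := (d : ℝ) with hDdef
  set δ : ℝ := 4 / (9 * D) with hδdef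
  have hδpos : 0 < δ := by positivity
  have hδle : δ ≤ 4 / 9 := by
    rw [hδdef]
    rw [div_le_div_iff₀ (by linarith) (by norm_num)]
    nlinarith
  set α : ℝ := 1 - δ with hαdef
  have hαpos : 0 < α := by rw [hαdef]; linarith
  have hαne : α ≠ 0 := hαpos.ne'
  set β : ℝ := 4 / κ ^ 2 with hβdef
  have hβpos : 0 < β := by positivity
  have hsqD : Real.sqrt D ^ 2 = D := Real.sq_sqrt hD0.le
  have hsqDpos : 0 < Real.sqrt D := Real.sqrt_pos.2 hD0
  set t : ℝ := κ / (3 * Real.sqrt D) with htdef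
  have htpos : 0 < t := by rw [htdef]; positivity
  have ht2 : t ^ 2 = κ ^ 2 / (9 * D) := by
    rw [htdef, div_pow, mul_pow, hsqD]; norm_num
  have hαβ : α + β * t ^ 2 = 1 := by
    rw [ht2, hβdef, hαdef, hδdef]
    field_simp
    ring
  -- the new ellipsoid matrix
  set A' : Matrix (Fin d) (Fin d) ℝ := α • A + β • vecMulVec p p with hA'def
  have hquad : ∀ x : Fin d → ℝ, x ⬝ᵥ A' *ᵥ x = α * (x ⬝ᵥ A *ᵥ x) + β * (p ⬝ᵥ x) ^ 2 := by
    intro x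
    rw [hA'def, add_mulVec, smul_mulVec, smul_mulVec, dotProduct_add,
      dotProduct_smul, dotProduct_smul, quad_vecMulVec, smul_eq_mul, smul_eq_mul]
  have hA'pos : A'.PosDef := by
    rw [posDef_iff_dotProduct_mulVec]
    constructor
    · show A'ᴴ = A'
      rw [Matrix.conjTranspose_eq_transpose_of_trivial, hA'def, transpose_add,
        transpose_smul, transpose_smul, transpose_eq hA.isHermitian, vecMulVec_transpose]
    · intro x hx
      have h1 : 0 < x ⬝ᵥ A *ᵥ x := by
        have := hA.dotProduct_mulVec_pos hx; simpa using this
      have h2 : 0 ≤ (p ⬝ᵥ x) ^ 2 := sq_nonneg _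
      have : 0 < x ⬝ᵥ A' *ᵥ x := by rw [hquad]; nlinarith
      simpa using this
  -- containment of the slab
  have hsub : {w ∈ ellipsoid A | |p ⬝ᵥ w| ≤ κ / (3 * Real.sqrt D)} ⊆ ellipsoid A' := by
    rintro w ⟨hw1, hw2⟩
    have hw1' : w ⬝ᵥ A *ᵥ w ≤ 1 := hw1
    have hw2' : (p ⬝ᵥ w) ^ 2 ≤ t ^ 2 := by
      rw [← sq_abs]
      exact pow_le_pow_left₀ (abs_nonneg _) hw2 2
    show w ⬝ᵥ A' *ᵥ w ≤ 1
    rw [hquad]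
    nlinarith
  -- Cauchy-Schwarz : κ² ≤ m
  have hp0 : p ≠ 0 := by
    rintro rfl
    rw [zero_dotProduct] at hpv
    linarith
  have hAU : IsUnit A.det := isUnit_iff_ne_zero.2 hA.det_pos.ne'
  set u : Fin d → ℝ := A⁻¹ *ᵥ p with hudef
  set m : ℝ := p ⬝ᵥ u with hmdef
  have hm0 : 0 < m := by
    have h := hA.inv.dotProduct_mulVec_pos hp0
    rw [hmdef, hudef]
    simpa using h
  have hu : A *ᵥ u = p := by
    rw [hudef, mulVec_mulVec, Matrix.mul_nonsing_inv _ hAU, one_mulVec]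
  have hv1 : v ⬝ᵥ A *ᵥ v ≤ 1 := hVA hv
  set c : ℝ := (p ⬝ᵥ v) / m with hcdef
  have hc : c * m = p ⬝ᵥ v := by rw [hcdef]; field_simp
  have huAv : u ⬝ᵥ A *ᵥ v = p ⬝ᵥ v := by
    rw [dotProduct_mulVec, ← mulVec_transpose, transpose_eq hA.isHermitian, hu]
  have hup : u ⬝ᵥ p = m := by rw [hmdef, dotProduct_comm]
  have hw0 : 0 ≤ (v - c • u) ⬝ᵥ A *ᵥ (v - c • u) := by
    have := hA.posSemidef.dotProduct_mulVec_nonneg (v - c • u)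
    simpa using this
  have hexp : (v - c • u) ⬝ᵥ A *ᵥ (v - c • u)
      = v ⬝ᵥ A *ᵥ v - 2 * c * (p ⬝ᵥ v) + c ^ 2 * m := by
    rw [mulVec_sub, mulVec_smul, hu, sub_dotProduct, dotProduct_sub, dotProduct_sub,
      smul_dotProduct, smul_dotProduct, dotProduct_smul, dotProduct_smul, huAv, hup,
      dotProduct_comm v p]
    simp only [smul_eq_mul]
    ring
  have hkm : κ ^ 2 ≤ m := by
    have hc2 : c ^ 2 * m = c * (p ⬝ᵥ v) := by rw [sq, mul_assoc, hc]
    have h1 : c * (p ⬝ᵥ v) ≤ 1 := by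
      rw [hexp, hc2] at hw0; linarith
    have h2 : (p ⬝ᵥ v) ^ 2 = m * (c * (p ⬝ᵥ v)) := by rw [sq, ← hc]; ring
    have h3 : κ ^ 2 ≤ (p ⬝ᵥ v) ^ 2 := pow_le_pow_left₀ hκ.le hpv 2
    nlinarith
  -- determinant computation
  have hAN : A' = A * (α • 1 + β • vecMulVec u p) := by
    rw [Matrix.mul_add, Matrix.mul_smul, Matrix.mul_one, Matrix.mul_smul,
      Stmt14Aux.mul_vecMulVec, hu, hA'def]
  have hdetA' : A'.det = A.det * (α ^ d * (1 + β / α * m)) := by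
    have hN : α • (1 : Matrix (Fin d) (Fin d) ℝ) + β • vecMulVec u p
        = α • (1 + (β / α) • vecMulVec u p) := by
      rw [smul_add, smul_smul]
      congr 2
      field_simp
    have hdet1 : (1 + (β / α) • vecMulVec u p).det = 1 + β / α * m := by
      rw [Stmt14Aux.smul_vecMulVec, vecMulVec_eq (Fin 1), Matrix.det_one_add_replicateCol_mul_replicateRow,
        dotProduct_smul, smul_eq_mul, hmdef]
    rw [hAN, det_mul, hN, det_smul, Fintype.card_fin, hdet1]
  -- key numeric inequality
  have hαd : α ^ d = α ^ (d - 1) * α := by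
    conv_lhs => rw [show d = (d - 1) + 1 from (Nat.succ_pred_eq_of_pos hd).symm]
    rw [pow_succ]
  have hBern : 5 / 9 + δ ≤ α ^ (d - 1) := by
    have h := one_add_mul_le_pow (a := -δ) (by linarith) (d - 1)
    have hcast : ((d - 1 : ℕ) : ℝ) = D - 1 := by
      rw [Nat.cast_sub hd]; norm_num; exact hDdef.symm
    rw [hcast] at h
    have hδD : (D - 1) * δ = 4 / 9 - δ := by
      rw [hδdef]; field_simp
    have : 1 + (D - 1) * (-δ) = 5 / 9 + δ := by rw [mul_neg, hδD]; ring
    rw [this] at h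
    have hb : (1 : ℝ) + -δ = α := by rw [hαdef]; ring
    rw [hb] at h
    exact h
  have hm4 : 4 ≤ β * m := by
    have hβκ : β * κ ^ 2 = 4 := by rw [hβdef]; field_simp
    nlinarith
  have hkey : 25 / 9 ≤ α ^ d * (1 + β / α * m) := by
    have he : α ^ d * (1 + β / α * m) = α ^ (d - 1) * (α + β * m) := by
      rw [hαd]
      have : α * (1 + β / α * m) = α + β * m := by field_simp
      rw [mul_assoc, this]
    rw [he]
    have hA1 : 5 - δ ≤ α + β * m := by rw [hαdef]; linarith
    have hpow0 : (0 : ℝ) < α ^ (d - 1) := pow_pos hαpos _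
    have hmm : (5 / 9 + δ) * (5 - δ) ≤ α ^ (d - 1) * (α + β * m) :=
      mul_le_mul hBern hA1 (by linarith) hpow0.le
    nlinarith
  have hdd : 25 / 9 * A.det ≤ A'.det := by
    rw [hdetA']
    nlinarith [hA.det_pos]
  exact (hmin A' hA'pos hsub).trans (vol_le hA hA'pos hdd)
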